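/- (McDiarmid's inequality / bounded differences inequality) Let x_1,...,x_N be independent random variables taking values in a set 𝒳, and let S : 𝒳^N → ℝ satisfy |S(x_1,...,x_k,...,x_N) - S(x_1,...,x'_k,...,x_N)| ≤ α_k for all inputs and all k. Then P[S - E[S] ≥ Q] ≤ exp(-2Q² / Σ_k α_k²) for all Q > 0. -/

import Mathlib

open Real

lemma calcA {p : ℝ} (hp0 : 0 ≤ p) (hp1 : p ≤ 1) (h : ℝ) :
    (1 - p) * exp (-p * h) + p * exp ((1 - p) * h) ≤ exp (h ^ 2 / 8) := by
  set D : ℝ → ℝ := fun u => (1 - p) + p * exp u with hD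
  have hDpos : ∀ u, 0 < D u := by
    intro u
    rcases eq_or_lt_of_le hp0 with h0 | h0
    · simp [hD, ← h0]
    · have := exp_pos u
      have : 0 < p * exp u := mul_pos h0 this
      have h1 : 0 ≤ 1 - p := by linarith
      simp only [hD]; linarith
  -- f u = u^2/8 + p*u - log (D u); show f ≥ 0
  set f : ℝ → ℝ := fun u => u ^ 2 / 8 + p * u - log (D u) with hf
  set g : ℝ → ℝ := fun u => u / 4 + p - p * exp u / D u with hg
  have hDd : ∀ u, HasDerivAt D (p * exp u) u := by
    intro u
    exact ((Real.hasDerivAt_exp u).const_mul p).const_add (1 - p)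
  have hfd : ∀ u, HasDerivAt f (g u) u := by
    intro u
    have h1 : HasDerivAt (fun u : ℝ => u ^ 2 / 8 + p * u) (u / 4 + p) u := by
      have := ((hasDerivAt_pow 2 u).div_const 8).add ((hasDerivAt_id u).const_mul p)
      exact this.congr_deriv (by norm_num; ring)
    have h2 : HasDerivAt (fun u => log (D u)) (p * exp u / D u) u :=
      (hDd u).log (ne_of_gt (hDpos u))
    exact h1.sub h2
  have hgd : ∀ u, HasDerivAt g (1 / 4 - p * (1 - p) * exp u / (D u) ^ 2) u := by
    intro u
    have h1 : HasDerivAt (fun u : ℝ => u / 4 + p) (1 / 4) u := by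
      simpa using ((hasDerivAt_id u).div_const 4).add_const p
    have h2 : HasDerivAt (fun u => p * exp u / D u)
        ((p * exp u * D u - p * exp u * (p * exp u)) / (D u) ^ 2) u :=
      ((Real.hasDerivAt_exp u).const_mul p).div (hDd u) (ne_of_gt (hDpos u))
    have h3 := h1.sub h2
    refine h3.congr_deriv ?_
    have : p * exp u * D u - p * exp u * (p * exp u) = p * (1 - p) * exp u := by
      simp only [hD]; ring
    rw [this]
  have hgderiv_nonneg : ∀ u, 0 ≤ 1 / 4 - p * (1 - p) * exp u / (D u) ^ 2 := by
    intro u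
    rw [sub_nonneg, div_le_iff₀ (pow_pos (hDpos u) 2)]
    simp only [hD]
    nlinarith [sq_nonneg ((1 - p) - p * exp u), exp_pos u]
  have hgmono : Monotone g := by
    have : ∀ u, 0 ≤ deriv g u := by
      intro u; rw [(hgd u).deriv]; exact hgderiv_nonneg u
    exact monotone_of_deriv_nonneg (fun u => (hgd u).differentiableAt) this
  have hg0 : g 0 = 0 := by
    simp [hg, hD]
  have hfnonneg : ∀ u, 0 ≤ f u := by
    intro u
    have hf0 : f 0 = 0 := by simp [hf, hD]
    rcases le_total 0 u with hu | hu
    · have hmono : MonotoneOn f (Set.Icc 0 u) := by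
        apply monotoneOn_of_deriv_nonneg (convex_Icc 0 u)
          (fun v _ => ((hfd v).differentiableAt.continuousAt).continuousWithinAt)
        · intro v hv
          exact ((hfd v).differentiableAt).differentiableWithinAt
        · intro v hv
          rw [(hfd v).deriv]
          rw [interior_Icc] at hv
          have := hgmono (le_of_lt hv.1)
          rw [hg0] at this; exact this
      have := hmono (Set.left_mem_Icc.mpr hu) (Set.right_mem_Icc.mpr hu) hu
      rwa [hf0] at this
    · have hmono : AntitoneOn f (Set.Icc u 0) := by
        apply antitoneOn_of_deriv_nonpos (convex_Icc u 0)
          (fun v _ => ((hfd v).differentiableAt.continuousAt).continuousWithinAt)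
        · intro v hv
          exact ((hfd v).differentiableAt).differentiableWithinAt
        · intro v hv
          rw [(hfd v).deriv]
          rw [interior_Icc] at hv
          have := hgmono (le_of_lt hv.2)
          rw [hg0] at this; exact this
      have := hmono (Set.left_mem_Icc.mpr hu) (Set.right_mem_Icc.mpr hu) hu
      rwa [hf0] at this
  -- conclude
  have key := hfnonneg h
  have hDh := hDpos h
  have hlog : log (D h) ≤ h ^ 2 / 8 + p * h := by
    simp only [hf] at key; linarith
  have hexp : D h ≤ exp (h ^ 2 / 8 + p * h) := by
    calc D h = exp (log (D h)) := (exp_log hDh).symm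
    _ ≤ _ := exp_le_exp.mpr hlog
  have e1 : exp ((1 - p) * h) = exp (-p * h) * exp h := by rw [← exp_add]; ring_nf
  have : (1 - p) * exp (-p * h) + p * exp ((1 - p) * h) = exp (-p * h) * D h := by
    simp only [hD]; rw [e1]; ring
  rw [this]
  calc exp (-p * h) * D h ≤ exp (-p * h) * exp (h ^ 2 / 8 + p * h) := by
        exact mul_le_mul_of_nonneg_left hexp (le_of_lt (exp_pos _))
  _ = exp (h ^ 2 / 8) := by rw [← exp_add]; ring_nf

open MeasureTheory ProbabilityTheory

lemma integrable_of_abs_le {𝒳 : Type*} [MeasurableSpace 𝒳] (ν : Measure 𝒳)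
    [IsFiniteMeasure ν] {f : 𝒳 → ℝ} (hf : Measurable f) (C : ℝ)
    (hC : ∀ y, |f y| ≤ C) : Integrable f ν :=
  (integrable_const C).mono' hf.aestronglyMeasurable
    (Filter.Eventually.of_forall (by simpa using hC))

lemma hoeffding_lem {𝒳 : Type*} [MeasurableSpace 𝒳] (ν : Measure 𝒳)
    [IsProbabilityMeasure ν] (g : 𝒳 → ℝ) (hg : Measurable g)
    (a b : ℝ) (hab : ∀ y, g y ∈ Set.Icc a b) (hmean : ∫ y, g y ∂ν = 0) (t : ℝ) :
    ∫ y, Real.exp (t * g y) ∂ν ≤ Real.exp (t ^ 2 * (b - a) ^ 2 / 8) := by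
  have hne : Nonempty 𝒳 := by
    by_contra hc
    rw [not_nonempty_iff] at hc
    have h1 : (ν Set.univ) = 1 := measure_univ
    rw [Set.univ_eq_empty_iff.mpr hc, measure_empty] at h1
    exact zero_ne_one h1
  obtain ⟨y₀⟩ := hne
  have hale : a ≤ b := le_trans (hab y₀).1 (hab y₀).2
  -- integrability of g and of exp (t * g)
  have hgint : Integrable g ν := integrable_of_abs_le ν hg (max |a| |b|)
    (fun y => abs_le.mpr ⟨le_trans (neg_le_neg (le_max_left |a| |b|))
      (le_trans (neg_abs_le a) (hab y).1), le_trans (hab y).2 (le_trans (le_abs_self b) (le_max_right _ _))⟩)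
  have ha0 : a ≤ 0 := by
    have : ∫ y, (a : ℝ) ∂ν ≤ ∫ y, g y ∂ν :=
      integral_mono (integrable_const a) hgint (fun y => (hab y).1)
    simpa [hmean] using this
  have hb0 : 0 ≤ b := by
    have : ∫ y, g y ∂ν ≤ ∫ y, (b : ℝ) ∂ν :=
      integral_mono hgint (integrable_const b) (fun y => (hab y).2)
    simpa [hmean] using this
  rcases eq_or_lt_of_le hale with heq | hlt
  · -- a = b : g ≡ a = 0
    have hg0 : ∀ y, g y = 0 := by
      intro y
      have := hab y
      rw [← heq] at this
      have hy : g y = a := le_antisymm this.2 this.1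
      have : a = 0 := le_antisymm ha0 (by rw [← heq] at hb0; exact hb0)
      rw [hy, this]
    simp only [hg0, mul_zero, Real.exp_zero, integral_const, measure_univ,
      ENNReal.toReal_one, probReal_univ, smul_eq_mul, one_mul]
    exact Real.one_le_exp (by positivity)
  · have hba : 0 < b - a := sub_pos.mpr hlt
    have hint : Integrable (fun y => Real.exp (t * g y)) ν := by
      apply integrable_of_abs_le ν (by fun_prop) (Real.exp (|t| * max |a| |b|))
      intro y
      rw [abs_of_pos (exp_pos _)]
      apply Real.exp_le_exp.mpr
      calc t * g y ≤ |t * g y| := le_abs_self _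
      _ = |t| * |g y| := abs_mul t (g y)
      _ ≤ |t| * max |a| |b| := by
          apply mul_le_mul_of_nonneg_left _ (abs_nonneg t)
          rw [abs_le]
          exact ⟨le_trans (neg_le_neg (le_max_left |a| |b|))
            (le_trans (neg_abs_le a) (hab y).1),
            le_trans (hab y).2 (le_trans (le_abs_self b) (le_max_right _ _))⟩
    -- convexity pointwise bound
    have hconv : ∀ y, Real.exp (t * g y) ≤
        (b - g y) / (b - a) * Real.exp (t * a) + (g y - a) / (b - a) * Real.exp (t * b) := by
      intro y
      have hw1 : (0:ℝ) ≤ (b - g y) / (b - a) := div_nonneg (by linarith [(hab y).2]) hba.le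
      have hw2 : (0:ℝ) ≤ (g y - a) / (b - a) := div_nonneg (by linarith [(hab y).1]) hba.le
      have hsum : (b - g y) / (b - a) + (g y - a) / (b - a) = 1 := by
        field_simp; ring
      have := convexOn_exp.2 (Set.mem_univ (t * a)) (Set.mem_univ (t * b)) hw1 hw2 hsum
      simp only [smul_eq_mul] at this
      have harg : (b - g y) / (b - a) * (t * a) + (g y - a) / (b - a) * (t * b) = t * g y := by
        field_simp
        ring
      rwa [harg] at this
    have hstep : ∫ y, Real.exp (t * g y) ∂ν ≤
        b / (b - a) * Real.exp (t * a) + (-a) / (b - a) * Real.exp (t * b) := by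
      have hrint : Integrable (fun y => (b - g y) / (b - a) * Real.exp (t * a)
          + (g y - a) / (b - a) * Real.exp (t * b)) ν := by
        apply Integrable.add
        · exact ((((integrable_const b).sub hgint).div_const _).mul_const _)
        · exact (((hgint.sub (integrable_const a)).div_const _).mul_const _)
      calc ∫ y, Real.exp (t * g y) ∂ν
          ≤ ∫ y, ((b - g y) / (b - a) * Real.exp (t * a)
            + (g y - a) / (b - a) * Real.exp (t * b)) ∂ν :=
            integral_mono hint hrint hconv
      _ = ∫ y, ((b / (b - a) * Real.exp (t * a) + (-a) / (b - a) * Real.exp (t * b))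
            + (Real.exp (t * b) / (b - a) - Real.exp (t * a) / (b - a)) * g y) ∂ν := by
            congr 1; funext y; field_simp; ring
      _ = b / (b - a) * Real.exp (t * a) + (-a) / (b - a) * Real.exp (t * b) := by
            rw [integral_add (integrable_const _) (hgint.const_mul _),
              MeasureTheory.integral_const_mul, hmean, integral_const]
            simp
    refine le_trans hstep ?_
    -- apply calcA with p = -a/(b-a), h = t*(b-a)
    set p : ℝ := -a / (b - a) with hp
    have hp0 : 0 ≤ p := div_nonneg (by linarith) hba.le
    have hp1 : p ≤ 1 := by
      rw [hp, div_le_one hba]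
      linarith
    have key := calcA hp0 hp1 (t * (b - a))
    have e1 : -p * (t * (b - a)) = t * a := by
      rw [hp]; field_simp
    have e2 : (1 - p) * (t * (b - a)) = t * b := by
      rw [hp]; field_simp; ring
    have e3 : (1 - p) = b / (b - a) := by
      rw [hp]; field_simp; ring
    have e4 : (t * (b - a)) ^ 2 / 8 = t ^ 2 * (b - a) ^ 2 / 8 := by ring
    rw [e1, e2, e3, e4] at key
    convert key using 2
lemma nonempty_of_prob {𝒳 : Type*} [MeasurableSpace 𝒳] (ν : Measure 𝒳)
    [IsProbabilityMeasure ν] : Nonempty 𝒳 := by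
  by_contra hc
  rw [not_nonempty_iff] at hc
  have h1 : (ν Set.univ) = 1 := measure_univ
  rw [Set.univ_eq_empty_iff.mpr hc, measure_empty] at h1
  exact zero_ne_one h1

lemma osc_of_bdd {𝒳 : Type*} {N : ℕ} (S : (Fin N → 𝒳) → ℝ) (α : Fin N → ℝ)
    (hbd : ∀ (v : Fin N → 𝒳) (k : Fin N) (y : 𝒳),
      |S v - S (Function.update v k y)| ≤ α k) (v w : Fin N → 𝒳) :
    |S v - S w| ≤ ∑ k, α k := by
  suffices h : ∀ s : Finset (Fin N), ∀ v w : Fin N → 𝒳, (∀ i, i ∉ s → v i = w i) →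
      |S v - S w| ≤ ∑ k ∈ s, α k by
    exact h Finset.univ v w (fun i hi => absurd (Finset.mem_univ i) hi)
  intro s
  induction s using Finset.induction_on with
  | empty =>
    intro v w h
    have : v = w := funext fun i => h i (Finset.notMem_empty i)
    simp [this]
  | @insert a s ha ihs =>
    intro v w hvw
    set v' := Function.update v a (w a) with hv'
    have h1 : |S v - S v'| ≤ α a := hbd v a (w a)
    have h2 : |S v' - S w| ≤ ∑ k ∈ s, α k := by
      apply ihs
      intro i hi
      by_cases hia : i = a
      · subst hia; simp [hv']
      · rw [hv', Function.update_of_ne hia]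
        exact hvw i (by simp [hia, hi])
    calc |S v - S w| ≤ |S v - S v'| + |S v' - S w| := abs_sub_le _ _ _
    _ ≤ α a + ∑ k ∈ s, α k := add_le_add h1 h2
    _ = ∑ k ∈ insert a s, α k := (Finset.sum_insert ha).symm

lemma abs_exp_le {z C : ℝ} (h : z ≤ C) : |Real.exp z| ≤ Real.exp C := by
  rw [abs_of_pos (Real.exp_pos z)]; exact Real.exp_le_exp.mpr h

lemma mgf_pi {𝒳 : Type*} [MeasurableSpace 𝒳] :
    ∀ (N : ℕ) (ν : Fin N → Measure 𝒳), (∀ i, IsProbabilityMeasure (ν i)) →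
    ∀ (S : (Fin N → 𝒳) → ℝ), Measurable S →
    ∀ (α : Fin N → ℝ),
    (∀ (v : Fin N → 𝒳) (k : Fin N) (y : 𝒳),
      |S v - S (Function.update v k y)| ≤ α k) →
    ∀ t : ℝ,
    ∫ v, Real.exp (t * (S v - ∫ w, S w ∂(Measure.pi ν))) ∂(Measure.pi ν)
      ≤ Real.exp (t ^ 2 * (∑ k, (α k) ^ 2) / 8) := by
  intro N
  induction N with
  | zero =>
    intro ν hprob S hS α hbd t
    haveI := hprob
    have h1 : ∫ w, S w ∂(Measure.pi ν) = S default := by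
      rw [show S = (fun _ => S default) from funext fun w => by
        rw [Subsingleton.elim w default]]
      simp
    rw [h1, show (fun v => Real.exp (t * (S v - S default)))
        = (fun _ : Fin 0 → 𝒳 => (1:ℝ)) from funext fun v => by
      rw [Subsingleton.elim v default]; simp]
    simp
  | succ n ih =>
    intro ν hprob S hS α hbd t
    haveI := hprob
    haveI : ∀ j : Fin n, IsProbabilityMeasure (ν j.succ) := fun j => hprob _
    obtain ⟨y₀⟩ := nonempty_of_prob (ν 0)
    haveI : Nonempty 𝒳 := ⟨y₀⟩
    set Mpi : Measure (Fin (n+1) → 𝒳) := Measure.pi ν with hMpi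
    set Ppi : Measure (Fin n → 𝒳) := Measure.pi (fun j => ν j.succ) with hPpi
    -- the measurable equivalence
    set e := MeasurableEquiv.piFinSuccAbove (fun _ : Fin (n+1) => 𝒳) 0 with he
    have hmp : MeasurePreserving e Mpi ((ν 0).prod Ppi) := by
      have h := measurePreserving_piFinSuccAbove ν 0
      have : (fun j : Fin n => ν ((0 : Fin (n+1)).succAbove j)) = fun j => ν j.succ := by
        funext j; rw [Fin.succAbove_zero]
      rwa [this] at h
    have hesymm : ∀ p : 𝒳 × (Fin n → 𝒳), e.symm p = Fin.cons p.1 p.2 := by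
      intro p
      simp [he, MeasurableEquiv.piFinSuccAbove, Fin.insertNthEquiv,
        Fin.insertNth_zero']
    have htrans : ∀ F : (Fin (n+1) → 𝒳) → ℝ,
        ∫ v, F v ∂Mpi = ∫ p, F (Fin.cons p.1 p.2) ∂((ν 0).prod Ppi) := by
      intro F
      have := hmp.integral_comp e.measurableEmbedding (fun z => F (e.symm z))
      simp only [MeasurableEquiv.symm_apply_apply] at this
      rw [this]
      simp only [hesymm]

    have hcons : Measurable (fun p : 𝒳 × (Fin n → 𝒳) => (Fin.cons p.1 p.2 : Fin (n+1) → 𝒳)) := by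
      rw [measurable_pi_iff]
      intro i
      refine Fin.cases ?_ ?_ i
      · simpa using measurable_fst
      · intro j; simpa [Function.comp_def] using (measurable_pi_apply j).comp measurable_snd
    have hconsy : ∀ y : 𝒳, Measurable (fun u : Fin n → 𝒳 => (Fin.cons y u : Fin (n+1) → 𝒳)) :=
      fun y => hcons.comp (measurable_const.prodMk measurable_id)
    set B : ℝ := |S (fun _ => y₀)| + ∑ k, α k with hB
    have hSB : ∀ v, |S v| ≤ B := by
      intro v
      have h1 := osc_of_bdd S α hbd v (fun _ => y₀)
      calc |S v| = |(S v - S (fun _ => y₀)) + S (fun _ => y₀)| := by ring_nf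
      _ ≤ |S v - S (fun _ => y₀)| + |S (fun _ => y₀)| := abs_add_le _ _
      _ ≤ B := by rw [hB]; linarith
    set ES : ℝ := ∫ v, S v ∂Mpi with hES
    set m : 𝒳 → ℝ := fun y => ∫ u, S (Fin.cons y u) ∂Ppi with hm
    have hm_meas : Measurable m := by
      have h1 : StronglyMeasurable (fun p : 𝒳 × (Fin n → 𝒳) => S (Fin.cons p.1 p.2)) :=
        (hS.comp hcons).stronglyMeasurable
      rw [hm]
      exact h1.integral_prod_right'.measurable
    have hm_bd : ∀ y, |m y| ≤ B := by
      intro y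
      have h1 : ‖∫ u, S (Fin.cons y u) ∂Ppi‖ ≤ B * (Ppi Set.univ).toReal :=
        norm_integral_le_of_norm_le_const (Filter.Eventually.of_forall fun u => by
          simpa using hSB (Fin.cons y u))
      simpa [hm, measure_univ] using h1
    have hm_int : Integrable m (ν 0) := integrable_of_abs_le _ hm_meas B hm_bd
    have hSm_int : ∀ y, Integrable (fun u => S (Fin.cons y u)) Ppi := fun y =>
      integrable_of_abs_le _ (hS.comp (hconsy y)) B (fun u => hSB _)
    have hosc_m : ∀ y y', |m y - m y'| ≤ α 0 := by
      intro y y'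
      have h1 : m y - m y' = ∫ u, (S (Fin.cons y u) - S (Fin.cons y' u)) ∂Ppi := by
        rw [integral_sub (hSm_int y) (hSm_int y')]
      rw [h1]
      have h2 : ‖∫ u, (S (Fin.cons y u) - S (Fin.cons y' u)) ∂Ppi‖
          ≤ α 0 * (Ppi Set.univ).toReal :=
        norm_integral_le_of_norm_le_const (Filter.Eventually.of_forall fun u => by
          have h3 := hbd (Fin.cons y u) 0 y'
          rw [Fin.update_cons_zero] at h3
          simpa using h3)
      simpa [measure_univ] using h2
    have hEq : ES = ∫ y, m y ∂(ν 0) := by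
      rw [hES, htrans S, integral_prod (fun p : 𝒳 × (Fin n → 𝒳) => S (Fin.cons p.1 p.2))
        (integrable_of_abs_le _ (hS.comp hcons) B (fun p => hSB _))]
    set g : 𝒳 → ℝ := fun y => m y - ES with hg
    have hg_meas : Measurable g := hm_meas.sub measurable_const
    have hg_mean : ∫ y, g y ∂(ν 0) = 0 := by
      simp only [hg]
      rw [integral_sub hm_int (integrable_const ES), integral_const, ← hEq]
      simp
    have hbdd : BddBelow (Set.range g) := by
      refine ⟨g y₀ - α 0, ?_⟩
      rintro z ⟨y, rfl⟩
      have h := abs_le.mp (hosc_m y₀ y)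
      simp only [hg]
      linarith [h.2]
    set a : ℝ := ⨅ y, g y with ha
    have hga : ∀ y, a ≤ g y := fun y => ciInf_le hbdd y
    have hgb : ∀ y, g y ≤ a + α 0 := by
      intro y
      have h1 : g y - α 0 ≤ a := le_ciInf fun y' => by
        have h := abs_le.mp (hosc_m y y')
        simp only [hg]
        linarith [h.1]
      linarith
    have hhoeff := hoeffding_lem (ν 0) g hg_meas a (a + α 0)
      (fun y => ⟨hga y, hgb y⟩) hg_mean t
    rw [show a + α 0 - a = α 0 by ring] at hhoeff
    have hIH : ∀ y, ∫ u, Real.exp (t * (S (Fin.cons y u) - m y)) ∂Ppi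
        ≤ Real.exp (t ^ 2 * (∑ j : Fin n, (α j.succ) ^ 2) / 8) := by
      intro y
      have hbd' : ∀ (u : Fin n → 𝒳) (j : Fin n) (z : 𝒳),
          |S (Fin.cons y u) - S (Fin.cons y (Function.update u j z))| ≤ α j.succ := by
        intro u j z
        rw [Fin.cons_update]
        exact hbd (Fin.cons y u) j.succ z
      have h1 := ih (fun j => ν j.succ) (fun j => inferInstance)
        (fun u => S (Fin.cons y u)) (hS.comp (hconsy y)) (fun j => α j.succ) hbd' t
      have h2 : (∫ w, S (Fin.cons y w) ∂(Measure.pi fun j => ν j.succ)) = m y := rfl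
      rw [h2] at h1
      exact h1
    set K : ℝ := Real.exp (t ^ 2 * (∑ j : Fin n, (α j.succ) ^ 2) / 8) with hKdef
    have hKpos : 0 < K := by rw [hKdef]; exact Real.exp_pos _
    have hEbd : ∀ v : Fin (n+1) → 𝒳,
        |Real.exp (t * (S v - ES))| ≤ Real.exp (|t| * (B + |ES|)) := by
      intro v
      apply abs_exp_le
      calc t * (S v - ES) ≤ |t * (S v - ES)| := le_abs_self _
      _ = |t| * |S v - ES| := abs_mul _ _
      _ ≤ |t| * (B + |ES|) :=
          mul_le_mul_of_nonneg_left
            (le_trans (abs_sub (S v) ES) (add_le_add (hSB v) le_rfl)) (abs_nonneg t)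
    have hFint : Integrable
        (fun p : 𝒳 × (Fin n → 𝒳) => Real.exp (t * (S (Fin.cons p.1 p.2) - ES)))
        ((ν 0).prod Ppi) :=
      integrable_of_abs_le _
        (Real.measurable_exp.comp (measurable_const.mul ((hS.comp hcons).sub measurable_const)))
        _ (fun p => hEbd _)
    have hmain : ∫ v, Real.exp (t * (S v - ES)) ∂Mpi
        = ∫ y, (∫ u, Real.exp (t * (S (Fin.cons y u) - m y)) ∂Ppi)
            * Real.exp (t * g y) ∂(ν 0) := by
      rw [htrans (fun v => Real.exp (t * (S v - ES))), integral_prod _ hFint]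
      congr 1
      funext y
      rw [← integral_mul_const]
      congr 1
      funext u
      rw [← Real.exp_add]
      congr 1
      simp only [hg]
      ring
    have houter_meas : Measurable
        (fun y => (∫ u, Real.exp (t * (S (Fin.cons y u) - m y)) ∂Ppi)) := by
      have h1 : StronglyMeasurable
          (fun p : 𝒳 × (Fin n → 𝒳) => Real.exp (t * (S (Fin.cons p.1 p.2) - m p.1))) :=
        (Real.measurable_exp.comp (measurable_const.mul
          ((hS.comp hcons).sub (hm_meas.comp measurable_fst)))).stronglyMeasurable
      exact h1.integral_prod_right'.measurable
    have hinner_nonneg : ∀ y, 0 ≤ ∫ u, Real.exp (t * (S (Fin.cons y u) - m y)) ∂Ppi :=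
      fun y => integral_nonneg fun u => (Real.exp_pos _).le
    have hgbd : ∀ y, |Real.exp (t * g y)| ≤ Real.exp (|t| * (B + |ES|)) := by
      intro y
      apply abs_exp_le
      calc t * g y ≤ |t * g y| := le_abs_self _
      _ = |t| * |g y| := abs_mul _ _
      _ ≤ |t| * (B + |ES|) := by
          apply mul_le_mul_of_nonneg_left _ (abs_nonneg t)
          refine le_trans ?_ (add_le_add (hm_bd y) (le_refl |ES|))
          simp only [hg]
          exact abs_sub (m y) ES
    have hlhs_int : Integrable
        (fun y => (∫ u, Real.exp (t * (S (Fin.cons y u) - m y)) ∂Ppi)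
          * Real.exp (t * g y)) (ν 0) := by
      apply integrable_of_abs_le _
        (houter_meas.mul (Real.measurable_exp.comp (measurable_const.mul hg_meas)))
        (K * Real.exp (|t| * (B + |ES|)))
      intro y
      simp only [Pi.mul_apply, Function.comp_apply]
      rw [abs_mul]
      apply mul_le_mul _ (hgbd y) (abs_nonneg _) hKpos.le
      rw [abs_of_nonneg (hinner_nonneg y)]
      exact hIH y
    have hrhs_int : Integrable (fun y => K * Real.exp (t * g y)) (ν 0) := by
      apply integrable_of_abs_le _
        (measurable_const.mul (Real.measurable_exp.comp (measurable_const.mul hg_meas)))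
        (K * Real.exp (|t| * (B + |ES|)))
      intro y
      simp only [Pi.mul_apply, Function.comp_apply]
      rw [abs_mul, abs_of_pos hKpos]
      exact mul_le_mul_of_nonneg_left (hgbd y) hKpos.le
    calc ∫ v, Real.exp (t * (S v - ES)) ∂Mpi
        = ∫ y, (∫ u, Real.exp (t * (S (Fin.cons y u) - m y)) ∂Ppi)
            * Real.exp (t * g y) ∂(ν 0) := hmain
    _ ≤ ∫ y, K * Real.exp (t * g y) ∂(ν 0) :=
        integral_mono hlhs_int hrhs_int
          (fun y => mul_le_mul_of_nonneg_right (hIH y) (Real.exp_pos _).le)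
    _ = K * ∫ y, Real.exp (t * g y) ∂(ν 0) := MeasureTheory.integral_const_mul K _
    _ ≤ K * Real.exp (t ^ 2 * (α 0) ^ 2 / 8) :=
        mul_le_mul_of_nonneg_left hhoeff hKpos.le
    _ = Real.exp (t ^ 2 * (∑ k : Fin (n+1), (α k) ^ 2) / 8) := by
        rw [hKdef, ← Real.exp_add, Fin.sum_univ_succ]
        congr 1
        ring

/-- McDiarmid's inequality (bounded differences inequality). -/
theorem mcdiarmid {Ω 𝒳 : Type*} [MeasurableSpace Ω] [MeasurableSpace 𝒳]
    (μ : Measure Ω) [IsProbabilityMeasure μ] (N : ℕ)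
    (x : Fin N → Ω → 𝒳) (hmeas : ∀ i, Measurable (x i))
    (hind : iIndepFun x μ)
    (S : (Fin N → 𝒳) → ℝ) (hS : Measurable S)
    (α : Fin N → ℝ) (hα : ∀ k, 0 < α k)
    (hbd : ∀ (v : Fin N → 𝒳) (k : Fin N) (y : 𝒳),
      |S v - S (Function.update v k y)| ≤ α k)
    (Q : ℝ) (hQ : 0 < Q) :
    (μ {ω | Q ≤ S (fun i => x i ω) - μ[fun ω => S (fun i => x i ω)]}).toReal ≤
      Real.exp (-2 * Q ^ 2 / ∑ k, (α k) ^ 2) := by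
  rcases eq_or_lt_of_le (Finset.sum_nonneg (fun k _ => sq_nonneg (α k))) with hsum | hsum
  · -- sum of squares is zero: RHS = exp 0 = 1
    rw [← hsum]
    have h1 : (-2 * Q ^ 2 / (0:ℝ)) = 0 := by simp
    rw [h1, Real.exp_zero]
    calc (μ _).toReal ≤ (μ Set.univ).toReal :=
        ENNReal.toReal_mono (measure_ne_top μ _) (measure_mono (Set.subset_univ _))
    _ = 1 := by simp
  · -- main case
    have hN : N ≠ 0 := by
      intro h
      subst h
      simp at hsum
    set ν : Fin N → Measure 𝒳 := fun i => Measure.map (x i) μ with hν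
    haveI : ∀ i, IsProbabilityMeasure (ν i) := fun i =>
      Measure.isProbabilityMeasure_map (hmeas i).aemeasurable
    set φ : Ω → (Fin N → 𝒳) := fun ω i => x i ω with hφdef
    have hφ : Measurable φ := measurable_pi_iff.mpr hmeas
    have hmap : Measure.map φ μ = Measure.pi ν := by
      refine (Measure.pi_eq fun s hs => ?_).symm
      rw [Measure.map_apply hφ (MeasurableSet.univ_pi hs)]
      have hpre : φ ⁻¹' (Set.univ.pi s) = ⋂ i, x i ⁻¹' s i := by
        ext ω
        simp [hφdef, Set.mem_univ_pi]
      rw [hpre, hind.meas_iInter (fun i => ⟨s i, hs i, rfl⟩)]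
      exact Finset.prod_congr rfl fun i _ =>
        (Measure.map_apply (hmeas i) (hs i)).symm
    set ES : ℝ := ∫ v, S v ∂(Measure.pi ν) with hES
    have hEμ : μ[fun ω => S (fun i => x i ω)] = ES := by
      rw [hES, ← hmap, integral_map hφ.aemeasurable hS.aestronglyMeasurable]
    obtain ⟨y₀⟩ := nonempty_of_prob (ν ⟨0, Nat.pos_of_ne_zero hN⟩)
    set B : ℝ := |S (fun _ => y₀)| + ∑ k, α k with hB
    have hSB : ∀ v, |S v| ≤ B := by
      intro v
      have h1 := osc_of_bdd S α hbd v (fun _ => y₀)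
      calc |S v| = |(S v - S (fun _ => y₀)) + S (fun _ => y₀)| := by ring_nf
      _ ≤ |S v - S (fun _ => y₀)| + |S (fun _ => y₀)| := abs_add_le _ _
      _ ≤ B := by rw [hB]; linarith
    set A : Set (Fin N → 𝒳) := {v | Q ≤ S v - ES} with hA
    have hAmeas : MeasurableSet A :=
      measurableSet_le measurable_const (hS.sub measurable_const)
    have hevent : {ω | Q ≤ S (fun i => x i ω) - μ[fun ω => S (fun i => x i ω)]}
        = φ ⁻¹' A := by
      ext ω
      simp [hA, hφdef, hEμ]
    rw [hevent, ← Measure.map_apply hφ hAmeas, hmap]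
    -- Chernoff bound with t = 4Q / Σ α²
    set SA : ℝ := ∑ k, (α k) ^ 2 with hSA
    set t : ℝ := 4 * Q / SA with ht
    have htpos : 0 < t := by
      rw [ht]
      positivity
    have hmgf := mgf_pi N ν inferInstance S hS α hbd t
    rw [← hES, ← hSA] at hmgf
    -- integrability of the exponential
    have hFbd : ∀ v : Fin N → 𝒳,
        |Real.exp (t * (S v - ES) - t * Q)| ≤ Real.exp (|t| * (B + |ES|) + |t * Q|) := by
      intro v
      apply abs_exp_le
      have h1 : t * (S v - ES) ≤ |t| * (B + |ES|) := by
        calc t * (S v - ES) ≤ |t * (S v - ES)| := le_abs_self _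
        _ = |t| * |S v - ES| := abs_mul _ _
        _ ≤ |t| * (B + |ES|) :=
            mul_le_mul_of_nonneg_left
              (le_trans (abs_sub (S v) ES) (add_le_add (hSB v) le_rfl)) (abs_nonneg t)
      have h2 : -(t * Q) ≤ |t * Q| := neg_le_abs _
      linarith
    have hFint : Integrable (fun v => Real.exp (t * (S v - ES) - t * Q)) (Measure.pi ν) :=
      integrable_of_abs_le _
        (Real.measurable_exp.comp ((measurable_const.mul (hS.sub measurable_const)).sub
          measurable_const)) _ hFbd
    have hchern : (Measure.pi ν A).toReal
        ≤ ∫ v, Real.exp (t * (S v - ES) - t * Q) ∂(Measure.pi ν) := by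
      have h1 : (Measure.pi ν A).toReal
          = ∫ v, A.indicator (fun _ => (1:ℝ)) v ∂(Measure.pi ν) := by
        rw [integral_indicator hAmeas]
        simp
        rfl
      rw [h1]
      apply integral_mono ((integrable_const (1:ℝ)).indicator hAmeas) hFint
      intro v
      by_cases hv : v ∈ A
      · rw [Set.indicator_of_mem hv]
        rw [Real.one_le_exp_iff]
        have : Q ≤ S v - ES := hv
        nlinarith
      · rw [Set.indicator_of_notMem hv]
        exact (Real.exp_pos _).le
    have hsplit : ∫ v, Real.exp (t * (S v - ES) - t * Q) ∂(Measure.pi ν)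
        = (∫ v, Real.exp (t * (S v - ES)) ∂(Measure.pi ν)) * Real.exp (-(t * Q)) := by
      rw [← integral_mul_const]
      congr 1
      funext v
      rw [← Real.exp_add]
      ring_nf
    calc (Measure.pi ν A).toReal
        ≤ ∫ v, Real.exp (t * (S v - ES) - t * Q) ∂(Measure.pi ν) := hchern
    _ = (∫ v, Real.exp (t * (S v - ES)) ∂(Measure.pi ν)) * Real.exp (-(t * Q)) := hsplit
    _ ≤ Real.exp (t ^ 2 * SA / 8) * Real.exp (-(t * Q)) :=
        mul_le_mul_of_nonneg_right hmgf (Real.exp_pos _).le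
    _ = Real.exp (t ^ 2 * SA / 8 - t * Q) := by rw [← Real.exp_add]; ring_nf
    _ = Real.exp (-2 * Q ^ 2 / SA) := by
        congr 1
        rw [ht]
        field_simp
        ring
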